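/- Let 1 ≤ n < d and let E ⊂ ℝ^d be an n-ADR set having big pieces of Lipschitz graphs with constants M and δ. Then E has big projections in plenty of directions: there exists δ' > 0, depending only on n, d, M, δ and the ADR constants of E, such that for every x ∈ E and every r ∈ (0, diam(E)] there is an n-plane V_{x,r} ∈ G(d,n) with Hⁿ(π_V(E ∩ B(x,r))) ≥ δ'rⁿ for every V ∈ B(V_{x,r}, δ'). -/

import Mathlib

open MeasureTheory Metric Module Set
open scoped ENNReal NNReal RealInnerProductSpace

noncomputable section

/-- Euclidean space `ℝ^d`. -/
abbrev Euc (d : ℕ) : Type := EuclideanSpace ℝ (Fin d)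

/-- Orthogonal projection onto a subspace, as a map `ℝ^d → ℝ^d`. -/
noncomputable def projCLM {d : ℕ} (V : Submodule ℝ (Euc d)) : Euc d →L[ℝ] Euc d :=
  V.subtypeL.comp (V.orthogonalProjection)

/-- `E` is `n`-Ahlfors–David regular with constants `C₁ ≤ C₂`. -/
def IsADR {d : ℕ} (n : ℕ) (C₁ C₂ : ℝ) (E : Set (Euc d)) : Prop :=
  0 < C₁ ∧ C₁ ≤ C₂ ∧ ∀ x ∈ E, ∀ r : ℝ, 0 < r → ENNReal.ofReal r ≤ EMetric.diam E →
    ENNReal.ofReal (C₁ * r ^ n) ≤ μH[n] (E ∩ closedBall x r) ∧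
      μH[n] (E ∩ closedBall x r) ≤ ENNReal.ofReal (C₂ * r ^ n)

/-- `Γ` is an `n`-dimensional Lipschitz graph with Lipschitz constant at most `M`:
`Γ = {p + A p : p ∈ P}` for an `n`-dimensional subspace `P` and `M`-Lipschitz `A : P → P^⊥`. -/
def IsLipGraph {d : ℕ} (n : ℕ) (M : ℝ≥0) (Γ : Set (Euc d)) : Prop :=
  ∃ (P : Submodule ℝ (Euc d)) (A : P → Pᗮ), finrank ℝ P = n ∧ LipschitzWith M A ∧
    Γ = {x | ∃ p : P, x = (p : Euc d) + (A p : Euc d)}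

/-- `E` has big pieces of Lipschitz graphs with constants `M` and `δ`. -/
def HasBPLG {d : ℕ} (n : ℕ) (M : ℝ≥0) (δ : ℝ) (E : Set (Euc d)) : Prop :=
  0 < δ ∧ ∀ x ∈ E, ∀ r : ℝ, 0 < r → ENNReal.ofReal r ≤ EMetric.diam E →
    ∃ Γ : Set (Euc d), IsLipGraph n M Γ ∧
      ENNReal.ofReal (δ * r ^ n) ≤ μH[n] (E ∩ Γ ∩ closedBall x r)

/-- The coordinate subspace `ℝⁿ × {0} ⊆ ℝ^d`. -/
def coordSubspace (d n : ℕ) : Submodule ℝ (Euc d) where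
  carrier := {x | ∀ i : Fin d, n ≤ (i : ℕ) → x i = 0}
  add_mem' := by
    intro a b ha hb i hi
    simp [PiLp.add_apply, ha i hi, hb i hi]
  zero_mem' := by intro i hi; rfl
  smul_mem' := by
    intro c a ha i hi
    simp [PiLp.smul_apply, ha i hi]

/-- The closed ball of radius `ρ` around `W` in the Grassmannian `G(d,n)`, realised as a set
of subspaces of `ℝ^d`, with the metric `‖V - W‖ = ‖π_V - π_W‖` (operator norm). -/
def grBall {d : ℕ} (n : ℕ) (W : Submodule ℝ (Euc d)) (ρ : ℝ) : Set (Submodule ℝ (Euc d)) :=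
  {V | finrank ℝ V = n ∧ ‖projCLM V - projCLM W‖ ≤ ρ}

/-- The Borel σ-algebra on subspaces of `ℝ^d`, induced by `V ↦ π_V`. -/
instance grassMeasurableSpace (d : ℕ) : MeasurableSpace (Submodule ℝ (Euc d)) :=
  MeasurableSpace.comap (fun V => projCLM V) (borel (Euc d →L[ℝ] Euc d))

/-- The orthogonal group `O(d)`. -/
abbrev OG (d : ℕ) := Matrix.orthogonalGroup (Fin d) ℝ

instance (d : ℕ) : MeasurableSpace (OG d) := borel _

/-- `μ` is the Haar probability measure on the orthogonal group `O(d)`: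
a left-invariant Borel probability measure. -/
def IsHaarProb {d : ℕ} (μ : Measure (OG d)) : Prop :=
  IsProbabilityMeasure μ ∧ ∀ g : OG d, Measure.map (fun h => g * h) μ = μ

/-- The measure `γ_{d,n}` on the Grassmannian: the pushforward of the Haar probability
measure `μ` on `O(d)` under the map `g ↦ g(ℝⁿ × {0})`. -/
def grassmannOf {d : ℕ} (n : ℕ) (μ : Measure (OG d)) : Measure (Submodule ℝ (Euc d)) :=
  Measure.map
    (fun g : OG d => (coordSubspace d n).map
      (Matrix.toEuclideanLin (g : Matrix (Fin d) (Fin d) ℝ))) μ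

/-- The pushforward `π_{V♯}(Hⁿ|_E)` of `Hⁿ` restricted to `E` under the orthogonal
projection onto `V`. -/
def projPush {d : ℕ} (n : ℕ) (E : Set (Euc d)) (V : Submodule ℝ (Euc d)) : Measure (Euc d) :=
  Measure.map (projCLM V) (μH[n].restrict E)

/-- `Hⁿ` on the subspace `V`. -/
def hausdorffOn {d : ℕ} (n : ℕ) (V : Submodule ℝ (Euc d)) : Measure (Euc d) :=
  μH[n].restrict (V : Set (Euc d))

/-- The squared `L²(V)`-norm of the Radon–Nikodym derivative of `π_{V♯}(Hⁿ|_E)` with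
respect to `Hⁿ` on `V`. -/
def pushL2sq {d : ℕ} (n : ℕ) (E : Set (Euc d)) (V : Submodule ℝ (Euc d)) : ℝ≥0∞ :=
  ∫⁻ z, ((projPush n E V).rnDeriv (hausdorffOn n V) z) ^ 2 ∂(hausdorffOn n V)

/-- `π_{V♯}(Hⁿ|_E) ∈ L²(V)`: the pushforward is absolutely continuous with respect to `Hⁿ`
on `V`, with square-integrable density. -/
def MemL2 {d : ℕ} (n : ℕ) (E : Set (Euc d)) (V : Submodule ℝ (Euc d)) : Prop :=
  projPush n E V ≪ hausdorffOn n V ∧ pushL2sq n E V < ∞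

/-- The (two-sided) cone `X(x, V, α) = {y : |π_{V^⊥}(x - y)| ≤ α |x - y|}`. -/
def cone {d : ℕ} (V : Submodule ℝ (Euc d)) (x : Euc d) (α : ℝ) : Set (Euc d) :=
  {y | ‖projCLM Vᗮ (x - y)‖ ≤ α * ‖x - y‖}

/-- The truncated cone `X(x, V, α, R, r)`. -/
def coneAnn {d : ℕ} (V : Submodule ℝ (Euc d)) (x : Euc d) (α R r : ℝ) : Set (Euc d) :=
  cone V x α ∩ (closedBall x R \ ball x r)

/-- The vertical cone `X(x, α) := X(x, {0} × ℝ^{d-n}, α) = {y : |π_{ℝⁿ×{0}}(x-y)| ≤ α|x-y|}`. -/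
def vertCone {d : ℕ} (n : ℕ) (x : Euc d) (α : ℝ) : Set (Euc d) :=
  {y | ‖projCLM (coordSubspace d n) (x - y)‖ ≤ α * ‖x - y‖}

/-- The truncated vertical cone `X(x, α, R, r)`. -/
def vertConeAnn {d : ℕ} (n : ℕ) (x : Euc d) (α R r : ℝ) : Set (Euc d) :=
  vertCone n x α ∩ (closedBall x R \ ball x r)

/-- `E` satisfies the `n`-dimensional `(θ, M)`-property: for every `x ∈ E` at most `M`
dyadic scales `j` have `X(x, θ, 2^{-j}, 2^{-j-1}) ∩ E ≠ ∅`. -/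
def ThetaMProp {d : ℕ} (n : ℕ) (θ : ℝ) (M : ℕ) (E : Set (Euc d)) : Prop :=
  ∀ x ∈ E,
    {j : ℤ | (vertConeAnn n x θ (2 ^ (-j)) (2 ^ (-j - 1)) ∩ E).Nonempty}.Finite ∧
    {j : ℤ | (vertConeAnn n x θ (2 ^ (-j)) (2 ^ (-j - 1)) ∩ E).Nonempty}.ncard ≤ M

/-- The one-sided cone `X⁺(x, w, α)` in direction `w`. -/
def oneSidedCone {d : ℕ} (w : Euc d) (x : Euc d) (α : ℝ) : Set (Euc d) :=
  {y | ‖projCLM (Submodule.span ℝ {w})ᗮ (x - y)‖ ≤ α * ‖x - y‖ ∧ 0 ≤ ⟪y - x, w⟫}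

/-- The truncated one-sided cone `X⁺(x, w, α, R, r)`. -/
def oneSidedConeAnn {d : ℕ} (w : Euc d) (x : Euc d) (α R r : ℝ) : Set (Euc d) :=
  oneSidedCone w x α ∩ (closedBall x R \ ball x r)

/-- Combining `x ∈ ℝⁿ` and `y ∈ ℝ^{d-n}` into a point of `ℝ^d = ℝⁿ × ℝ^{d-n}`. -/
def pairFun {d n : ℕ} (x : Euc n) (y : Euc (d - n)) : Euc d :=
  WithLp.toLp 2 (fun i : Fin d => if h' : (i : ℕ) < n then x ⟨i, h'⟩ else y ⟨(i : ℕ) - n, by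
    have := i.isLt; omega⟩)

lemma projCLM_mem {d : ℕ} {P : Submodule ℝ (Euc d)} {p : Euc d} (hp : p ∈ P) :
    projCLM P p = p := by
  simp [projCLM, Submodule.orthogonalProjectionOnto_mem_subspace_eq_self (K := P) ⟨p, hp⟩]

lemma projCLM_orth {d : ℕ} {P : Submodule ℝ (Euc d)} {v : Euc d} (hv : v ∈ Pᗮ) :
    projCLM P v = 0 := by
  simp [projCLM, Submodule.orthogonalProjectionOnto_apply_of_mem_orthogonal hv]

/-- On a Lipschitz graph over `P`, distance is controlled by projected distance. -/
lemma graph_proj_lower {d : ℕ} {P : Submodule ℝ (Euc d)} {M : ℝ≥0} {A : P → Pᗮ}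
    (hA : LipschitzWith M A) (p q : P) :
    ‖((p : Euc d) + (A p : Euc d)) - ((q : Euc d) + (A q : Euc d))‖
      ≤ Real.sqrt (1 + (M : ℝ) ^ 2) *
        ‖projCLM P (((p : Euc d) + (A p : Euc d)) - ((q : Euc d) + (A q : Euc d)))‖ := by
  set u : Euc d := (p : Euc d) - (q : Euc d)
  set w : Euc d := (A p : Euc d) - (A q : Euc d)
  have hu : u ∈ P := P.sub_mem p.2 q.2
  have hw : w ∈ Pᗮ := Pᗮ.sub_mem (A p).2 (A q).2
  have hproj : projCLM P (u + w) = u := by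
    rw [map_add, projCLM_mem hu, projCLM_orth hw, add_zero]
  have hinner : ⟪u, w⟫ = 0 := Submodule.inner_right_of_mem_orthogonal hu hw
  have hsq : ‖u + w‖ ^ 2 = ‖u‖ ^ 2 + ‖w‖ ^ 2 := by
    rw [norm_add_sq_real, hinner]; ring
  have hwle : ‖w‖ ≤ (M : ℝ) * ‖u‖ := by
    have := hA.dist_le_mul p q
    simpa [dist_eq_norm, u, w, Subtype.dist_eq] using this
  have hdiff : ((p : Euc d) + (A p : Euc d)) - ((q : Euc d) + (A q : Euc d)) = u + w := by
    simp [u, w]; abel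
  rw [hdiff, hproj]
  have h1 : ‖u + w‖ ^ 2 ≤ (1 + (M : ℝ) ^ 2) * ‖u‖ ^ 2 := by
    rw [hsq]
    nlinarith [norm_nonneg w, norm_nonneg u]
  have h2 : ‖u + w‖ ≤ Real.sqrt ((1 + (M : ℝ) ^ 2) * ‖u‖ ^ 2) := by
    rw [← Real.sqrt_sq (norm_nonneg (u + w))]
    exact Real.sqrt_le_sqrt h1
  calc ‖u + w‖ ≤ Real.sqrt ((1 + (M : ℝ) ^ 2) * ‖u‖ ^ 2) := h2
    _ = Real.sqrt (1 + (M : ℝ) ^ 2) * ‖u‖ := by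
        rw [Real.sqrt_mul (by positivity), Real.sqrt_sq (norm_nonneg u)]


/-- BPLG implies big projections in plenty of directions (BPPD). -/
theorem stmt17 (n d : ℕ) (hn : 1 ≤ n) (hnd : n < d) (M : ℝ≥0) (δ C₁ C₂ : ℝ)
    (hδ : 0 < δ) :
    ∃ δ' : ℝ, 0 < δ' ∧
      ∀ E : Set (Euc d), IsADR n C₁ C₂ E → HasBPLG n M δ E →
        ∀ x ∈ E, ∀ r : ℝ, 0 < r → ENNReal.ofReal r ≤ EMetric.diam E →
          ∃ V : Submodule ℝ (Euc d), finrank ℝ V = n ∧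
            ∀ V' ∈ grBall n V δ',
              ENNReal.ofReal (δ' * r ^ n) ≤ μH[n] (projCLM V' '' (E ∩ closedBall x r)) := by
  set L : ℝ := Real.sqrt (1 + (M : ℝ) ^ 2) with hLdef
  have hL1 : 1 ≤ L := by
    rw [hLdef]
    have h0 : (1:ℝ) = Real.sqrt 1 := by simp
    nth_rewrite 1 [h0]
    exact Real.sqrt_le_sqrt (le_add_of_nonneg_right (by positivity))
  set K : ℝ := 2 * L with hKdef
  have hK1 : 1 ≤ K := by nlinarith
  have hK0 : 0 < K := by linarith
  have hKn0 : 0 < K ^ n := by positivity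
  refine ⟨min (1 / K) (δ / K ^ n), lt_min (one_div_pos.2 hK0) (div_pos hδ hKn0), ?_⟩
  set δ' : ℝ := min (1 / K) (δ / K ^ n) with hδ'def
  have hδ'K : δ' ≤ 1 / K := min_le_left _ _
  have hδ'2 : δ' * K ^ n ≤ δ := by
    have := min_le_right (1 / K) (δ / K ^ n)
    calc δ' * K ^ n ≤ (δ / K ^ n) * K ^ n := by
          apply mul_le_mul_of_nonneg_right this (le_of_lt hKn0)
      _ = δ := by field_simp
  intro E hADR hBPLG x hx r hr hrd
  obtain ⟨Γ, ⟨P, A, hPrank, hA, hΓeq⟩, hmeas⟩ := hBPLG.2 x hx r hr hrd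
  refine ⟨P, hPrank, ?_⟩
  rintro V' ⟨hV'rank, hV'close⟩
  set S : Set (Euc d) := E ∩ Γ ∩ closedBall x r with hSdef
  set f : Euc d → Euc d := ⇑(projCLM V') with hfdef
  -- the key lower Lipschitz bound on Γ
  have hkey : ∀ a ∈ Γ, ∀ b ∈ Γ, ‖a - b‖ ≤ K * ‖f a - f b‖ := by
    intro a ha b hb
    rw [hΓeq] at ha hb
    obtain ⟨p, rfl⟩ := ha
    obtain ⟨q, rfl⟩ := hb
    set a := (p : Euc d) + (A p : Euc d)
    set b := (q : Euc d) + (A q : Euc d)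
    have h1 : ‖a - b‖ ≤ L * ‖projCLM P (a - b)‖ := graph_proj_lower hA p q
    have h2 : ‖projCLM P (a - b)‖ ≤ ‖projCLM V' (a - b)‖ + δ' * ‖a - b‖ := by
      have : projCLM P (a - b) = projCLM V' (a - b) - (projCLM V' - projCLM P) (a - b) := by
        simp
      rw [this]
      refine (norm_sub_le _ _).trans ?_
      gcongr
      calc ‖(projCLM V' - projCLM P) (a - b)‖ ≤ ‖projCLM V' - projCLM P‖ * ‖a - b‖ :=
            ContinuousLinearMap.le_opNorm _ _
        _ ≤ δ' * ‖a - b‖ := by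
            apply mul_le_mul_of_nonneg_right hV'close (norm_nonneg _)
    have hf : f a - f b = projCLM V' (a - b) := by simp [hfdef]
    rw [hf]
    have hδ'K' : δ' * K ≤ 1 := by
      calc δ' * K ≤ (1 / K) * K := mul_le_mul_of_nonneg_right hδ'K (le_of_lt hK0)
        _ = 1 := by field_simp
    have hL0 : 0 < L := by linarith
    have h3 : L * δ' ≤ 1 / 2 := by nlinarith
    have h4 : L * δ' * ‖a - b‖ ≤ (1 / 2) * ‖a - b‖ :=
      mul_le_mul_of_nonneg_right h3 (norm_nonneg _)
    have h5 : ‖a - b‖ ≤ L * ‖projCLM V' (a - b)‖ + L * δ' * ‖a - b‖ := by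
      calc ‖a - b‖ ≤ L * ‖projCLM P (a - b)‖ := h1
        _ ≤ L * (‖projCLM V' (a - b)‖ + δ' * ‖a - b‖) :=
            mul_le_mul_of_nonneg_left h2 (le_of_lt hL0)
        _ = L * ‖projCLM V' (a - b)‖ + L * δ' * ‖a - b‖ := by ring
    have hgoal : K * ‖projCLM V' (a - b)‖ = 2 * (L * ‖projCLM V' (a - b)‖) := by
      rw [hKdef]; ring
    linarith [hgoal]
  have hSΓ : S ⊆ Γ := fun y hy => hy.1.2
  -- injectivity on S
  have hinj : InjOn f S := by
    intro a ha b hb hab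
    have := hkey a (hSΓ ha) b (hSΓ hb)
    rw [hab] at this
    simp only [sub_self, norm_zero, mul_zero] at this
    have : ‖a - b‖ = 0 := le_antisymm this (norm_nonneg _)
    rwa [norm_sub_eq_zero_iff] at this
  -- inverse is Lipschitz on the image
  set g : Euc d → Euc d := Function.invFunOn f S with hgdef
  set KN : ℝ≥0 := ⟨K, le_of_lt hK0⟩ with hKNdef
  have hglip : LipschitzOnWith KN g (f '' S) := by
    apply LipschitzOnWith.of_dist_le_mul
    rintro z ⟨a, ha, rfl⟩ w ⟨b, hb, rfl⟩
    have hga : g (f a) = a := hinj.leftInvOn_invFunOn ha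
    have hgb : g (f b) = b := hinj.leftInvOn_invFunOn hb
    rw [hga, hgb, dist_eq_norm, dist_eq_norm]
    exact hkey a (hSΓ ha) b (hSΓ hb)
  have hgim : S ⊆ g '' (f '' S) := by
    intro a ha
    exact ⟨f a, Set.mem_image_of_mem f ha, hinj.leftInvOn_invFunOn ha⟩
  -- measure chain
  have hHn : μH[(n:ℝ)] S ≤ (KN : ℝ≥0∞) ^ (n:ℝ) * μH[(n:ℝ)] (f '' S) :=
    le_trans (measure_mono hgim) (hglip.hausdorffMeasure_image_le (by positivity))
  have hKNe : (KN : ℝ≥0∞) ^ (n:ℝ) = ENNReal.ofReal (K ^ n) := by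
    rw [ENNReal.rpow_natCast, ENNReal.ofReal_pow (le_of_lt hK0)]
    congr 1
    simp [hKNdef, ENNReal.ofReal, Real.toNNReal, le_of_lt hK0]
    rfl
  have hKn_ne0 : (KN : ℝ≥0∞) ^ (n:ℝ) ≠ 0 := by
    rw [hKNe]; exact (ENNReal.ofReal_pos.2 hKn0).ne'
  have hKn_netop : (KN : ℝ≥0∞) ^ (n:ℝ) ≠ ∞ := by rw [hKNe]; exact ENNReal.ofReal_ne_top
  have hsub : f '' S ⊆ projCLM V' '' (E ∩ closedBall x r) := by
    apply Set.image_mono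
    intro y hy
    exact ⟨hy.1.1, hy.2⟩
  refine le_trans ?_ (measure_mono hsub)
  have step1 : ENNReal.ofReal (δ' * r ^ n) ≤ ENNReal.ofReal (δ * r ^ n) / (KN : ℝ≥0∞) ^ (n:ℝ) := by
    rw [ENNReal.le_div_iff_mul_le (Or.inl hKn_ne0) (Or.inl hKn_netop), hKNe,
      ← ENNReal.ofReal_mul (by positivity)]
    apply ENNReal.ofReal_le_ofReal
    calc δ' * r ^ n * K ^ n = (δ' * K ^ n) * r ^ n := by ring
      _ ≤ δ * r ^ n := by
          apply mul_le_mul_of_nonneg_right hδ'2 (by positivity)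
  refine step1.trans ?_
  rw [ENNReal.div_le_iff hKn_ne0 hKn_netop]
  calc ENNReal.ofReal (δ * r ^ n) ≤ μH[(n:ℝ)] S := hmeas
    _ ≤ (KN : ℝ≥0∞) ^ (n:ℝ) * μH[(n:ℝ)] (f '' S) := hHn
    _ = μH[(n:ℝ)] (f '' S) * (KN : ℝ≥0∞) ^ (n:ℝ) := mul_comm _ _

end
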